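/- arXiv:1305.2586 — 4 statements merged into one kernel-verified Lean document; each statement's English description precedes it below -/
import Mathlib

section
/- Breiman's Lemma: Let R be a nonnegative random variable with survival function F̄ that is regularly varying at infinity with index −α (α>0), and let S be an independent random variable taking values in (0,1). Then P(RS > x)/P(R > x) → E[S^α] as x→∞. -/
open Filter MeasureTheory ProbabilityTheory Real Topology Set

/-- Breiman's Lemma. -/
theorem breiman_lemma {Ω : Type*} [MeasureSpace Ω] [IsProbabilityMeasure (ℙ : Measure Ω)]
    (R S : Ω → ℝ) (hR : Measurable R) (hS : Measurable S)
    (hRpos : ∀ ω, 0 ≤ R ω) (hS01 : ∀ ω, S ω ∈ Set.Ioo (0:ℝ) 1)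
    (hindep : IndepFun R S) (α : ℝ) (hα : 0 < α)
    (hRV : ∀ x > 0, Tendsto
      (fun t => (ℙ {ω | R ω > t * x}).toReal / (ℙ {ω | R ω > t}).toReal) atTop
      (𝓝 (x ^ (-α)))) :
    Tendsto (fun x => (ℙ {ω | R ω * S ω > x}).toReal / (ℙ {ω | R ω > x}).toReal) atTop
      (𝓝 (∫ ω, S ω ^ α ∂ℙ)) := by
  classical
  set μR := Measure.map R ℙ with hμR
  set μS := Measure.map S ℙ with hμS
  haveI : IsProbabilityMeasure μR := Measure.isProbabilityMeasure_map hR.aemeasurable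
  haveI : IsProbabilityMeasure μS := Measure.isProbabilityMeasure_map hS.aemeasurable
  have hμRIoi : ∀ y : ℝ, μR (Ioi y) = ℙ {ω | R ω > y} := by
    intro y
    rw [hμR, Measure.map_apply hR measurableSet_Ioi]
    rfl
  set G : ℝ → ℝ := fun t => (ℙ {ω | R ω > t}).toReal with hG
  have hGdef : ∀ t : ℝ, G t = (ℙ {ω | R ω > t}).toReal := fun t => rfl
  have hGnonneg : ∀ t, 0 ≤ G t := fun t => ENNReal.toReal_nonneg
  have hGanti : Antitone G := by
    intro a b hab
    exact ENNReal.toReal_mono (measure_ne_top _ _)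
      (measure_mono fun ω h => lt_of_le_of_lt hab h)
  have hGmeas : Measurable G := hGanti.measurable
  -- positivity of G
  have hGpos : ∀ t, 0 < G t := by
    by_contra h
    push_neg at h
    obtain ⟨t0, ht0⟩ := h
    have ht0' : G t0 = 0 := le_antisymm ht0 (hGnonneg t0)
    have h2 : (0:ℝ) < (2:ℝ) ^ (-α) := rpow_pos_of_pos two_pos _
    have hev : ∀ᶠ t : ℝ in atTop,
        0 < (ℙ {ω | R ω > t * 2}).toReal / (ℙ {ω | R ω > t}).toReal :=
      (hRV 2 two_pos).eventually (eventually_gt_nhds h2)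
    obtain ⟨t, ht, htt0⟩ := (hev.and (eventually_ge_atTop t0)).exists
    have hGt : G t = 0 := le_antisymm (le_trans (hGanti htt0) ht0'.le) (hGnonneg t)
    rw [← hGdef, ← hGdef, hGt, div_zero] at ht
    exact lt_irrefl 0 ht
  -- measurability of y ↦ μR (Ioi y)
  have hμRmeas : Measurable fun y : ℝ => μR (Ioi y) := by
    have : Antitone fun y : ℝ => μR (Ioi y) := fun a b h => measure_mono (Ioi_subset_Ioi h)
    exact this.measurable
  -- independence: joint law is product
  have hmap : Measure.map (fun ω => (R ω, S ω)) ℙ = μR.prod μS :=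
    (indepFun_iff_map_prod_eq_prod_map_map hR.aemeasurable hS.aemeasurable).mp hindep
  -- key disintegration identity
  have hkey : ∀ x : ℝ, ℙ {ω | R ω * S ω > x} = ∫⁻ ω, μR (Ioi (x / S ω)) ∂ℙ := by
    intro x
    have hms : MeasurableSet {p : ℝ × ℝ | p.1 * p.2 > x} :=
      (measurable_fst.mul measurable_snd) measurableSet_Ioi
    have h1 : ℙ {ω | R ω * S ω > x} = (μR.prod μS) {p : ℝ × ℝ | p.1 * p.2 > x} := by
      rw [← hmap, Measure.map_apply (hR.prodMk hS) hms]
      rfl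
    have hae : ∀ᵐ s ∂μS, s ∈ Set.Ioo (0:ℝ) 1 := by
      rw [hμS]
      exact (ae_map_iff hS.aemeasurable measurableSet_Ioo).mpr (ae_of_all _ hS01)
    have h2 : ∫⁻ s, μR ((fun r => (r, s)) ⁻¹' {p : ℝ × ℝ | p.1 * p.2 > x}) ∂μS
        = ∫⁻ s, μR (Ioi (x / s)) ∂μS := by
      refine lintegral_congr_ae ?_
      filter_upwards [hae] with s hs
      congr 1
      ext r
      simp only [mem_preimage, mem_setOf_eq, mem_Ioi, gt_iff_lt]
      rw [div_lt_iff₀ hs.1]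
    have h3 : ∫⁻ s, μR (Ioi (x / s)) ∂μS = ∫⁻ ω, μR (Ioi (x / S ω)) ∂ℙ := by
      rw [hμS, lintegral_map
        (f := fun s : ℝ => μR (Ioi (x / s)))
        (hμRmeas.comp (measurable_const.div measurable_id)) hS]
    rw [h1, Measure.prod_apply_symm hms, h2, h3]
  -- express the ratio as an integral
  have hGint : ∀ x : ℝ, (ℙ {ω | R ω * S ω > x}).toReal / G x
      = ∫ ω, G (x / S ω) / G x ∂ℙ := by
    intro x
    rw [integral_div, hkey x, ← integral_toReal
      (f := fun ω => μR (Ioi (x / S ω)))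
      ((hμRmeas.comp (measurable_const.div hS)).aemeasurable)
      (ae_of_all _ fun ω => measure_lt_top _ _)]
    congr 1
    refine integral_congr_ae (ae_of_all _ fun ω => ?_)
    show (μR (Ioi (x / S ω))).toReal = G (x / S ω)
    rw [hGdef, hμRIoi]
  -- dominated convergence
  have hDCT : Tendsto (fun x => ∫ ω, G (x / S ω) / G x ∂ℙ) atTop
      (𝓝 (∫ ω, S ω ^ α ∂ℙ)) := by
    refine tendsto_integral_filter_of_dominated_convergence (fun _ => (1:ℝ)) ?_ ?_
      (integrable_const 1) ?_
    · exact Eventually.of_forall fun x =>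
        ((hGmeas.comp (measurable_const.div hS)).div_const _).aestronglyMeasurable
    · filter_upwards [eventually_gt_atTop (0:ℝ)] with x hx
      refine ae_of_all _ fun ω => ?_
      have hs := hS01 ω
      have h1 : x ≤ x / S ω := by
        rw [le_div_iff₀ hs.1]
        nlinarith [hs.2]
      rw [Real.norm_eq_abs, abs_of_nonneg (div_nonneg (hGnonneg _) (hGpos x).le),
        div_le_one (hGpos x)]
      exact hGanti h1
    · refine ae_of_all _ fun ω => ?_
      have hs := hS01 ω
      have hinv : (0:ℝ) < 1 / S ω := one_div_pos.mpr hs.1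
      have hval : (1 / S ω) ^ (-α) = S ω ^ α := by
        rw [one_div, Real.inv_rpow hs.1.le, Real.rpow_neg hs.1.le, inv_inv]
      have := hRV (1 / S ω) hinv
      rw [hval] at this
      refine this.congr fun t => ?_
      rw [hGdef, hGdef, mul_one_div]
  refine hDCT.congr' ?_
  exact Eventually.of_forall fun x => (hGint x).symm
end

section
/- Let R₀ ~ Beta(b,a) and define R = 1/R₀ − 1 (so R has the Beta distribution of the second kind with parameters a,b). Then P(R > x) = x^{−b}/(b B(b,a)) · [1 − (a+b)b/((1+b)x) (1+o(1))] as x→∞. -/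
open Filter MeasureTheory ProbabilityTheory Real Topology Set

/-- The density of the Beta distribution with parameters `a, b > 0`. -/
noncomputable def betaPDF (a b x : ℝ) : ℝ :=
  if 0 < x ∧ x < 1 then
    x ^ (a - 1) * (1 - x) ^ (b - 1) / (Real.Gamma a * Real.Gamma b / Real.Gamma (a + b))
  else 0

/-- The Euler Beta function `B(a,b) = Γ(a)Γ(b)/Γ(a+b)`. -/
noncomputable def eulerBeta (a b : ℝ) : ℝ :=
  Real.Gamma a * Real.Gamma b / Real.Gamma (a + b)


/-- slope limit: ((1-y)^p - 1)/y → -p as y → 0+. -/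
lemma slope_one_sub_rpow (p : ℝ) :
    Tendsto (fun y : ℝ => ((1 - y) ^ p - 1) / y) (𝓝[>] (0:ℝ)) (𝓝 (-p)) := by
  have h1 : HasDerivAt (fun y : ℝ => 1 - y) (-1) 0 := by
    simpa using (hasDerivAt_id (0:ℝ)).const_sub 1
  have h2 : HasDerivAt (fun x : ℝ => x ^ p) (p * (1:ℝ) ^ (p - 1)) 1 :=
    Real.hasDerivAt_rpow_const (Or.inl one_ne_zero)
  have h3 : HasDerivAt (fun y : ℝ => (1 - y) ^ p) (-p) 0 := by
    have := HasDerivAt.comp (𝕜 := ℝ) 0 (by simpa using h2) h1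
    simpa [Function.comp_def] using this
  have h4 := (hasDerivAt_iff_tendsto_slope.mp h3).mono_left
    (nhdsWithin_mono 0 (fun y hy => ne_of_gt hy : Ioi (0:ℝ) ⊆ {0}ᶜ))
  refine h4.congr' ?_
  filter_upwards [self_mem_nhdsWithin] with y hy
  simp [slope, one_rpow, div_eq_inv_mul]

section beta
variable {a b : ℝ}

lemma intInt_f (hb : 0 < b) {y : ℝ} (hy : 0 ≤ y) (hy1 : y < 1) :
    IntervalIntegrable (fun t : ℝ => t ^ (b - 1) * (1 - t) ^ (a - 1)) volume 0 y := by
  apply (intervalIntegral.intervalIntegrable_rpow' (by linarith)).mul_continuousOn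
  rw [Set.uIcc_of_le hy]
  exact (continuous_const.sub continuous_id).continuousOn.rpow_const
    (fun t ht => Or.inl (ne_of_gt (by simp only [Pi.sub_apply, id_eq]; nlinarith [ht.1, ht.2])))

lemma intInt_h (hb : 0 < b) {y : ℝ} (hy : 0 ≤ y) (hy1 : y < 1) :
    IntervalIntegrable (fun t : ℝ => t ^ (b - 1) * ((1 - t) ^ (a - 1) - 1)) volume 0 y := by
  apply (intervalIntegral.intervalIntegrable_rpow' (by linarith)).mul_continuousOn
  rw [Set.uIcc_of_le hy]
  exact ((continuous_const.sub continuous_id).continuousOn.rpow_const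
    (fun t ht => Or.inl (ne_of_gt (by simp only [Pi.sub_apply, id_eq]; nlinarith [ht.1, ht.2])))).sub continuousOn_const

lemma contOn_h : ContinuousOn (fun t : ℝ => t ^ (b - 1) * ((1 - t) ^ (a - 1) - 1)) (Ioo 0 1) := by
  apply ContinuousOn.mul
  · exact continuousOn_id.rpow_const (fun t ht => Or.inl (ne_of_gt ht.1))
  · exact ((continuous_const.sub continuous_id).continuousOn.rpow_const
      (fun t ht => Or.inl (ne_of_gt (by simp only [Pi.sub_apply, id_eq]; nlinarith [ht.1, ht.2])))).sub continuousOn_const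

lemma L2 (ha : 0 < a) (hb : 0 < b) :
    Tendsto (fun y : ℝ => (∫ t in (0:ℝ)..y, t ^ (b - 1) * ((1 - t) ^ (a - 1) - 1)) / y ^ (b + 1))
      (𝓝[>] (0:ℝ)) (𝓝 (-(a - 1) / (b + 1))) := by
  apply HasDerivAt.lhopital_zero_right_on_Ioo (a := 0) (b := 1/2)
    (f' := fun y => y ^ (b - 1) * ((1 - y) ^ (a - 1) - 1))
    (g' := fun y => (b + 1) * y ^ b) (by norm_num)
  · intro y hy
    have hy1 : y ∈ Ioo (0:ℝ) 1 := ⟨hy.1, by linarith [hy.2]⟩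
    exact intervalIntegral.integral_hasDerivAt_right
      (intInt_h hb (le_of_lt hy.1) (by linarith [hy.2]))
      (contOn_h.stronglyMeasurableAtFilter isOpen_Ioo y hy1)
      (contOn_h.continuousAt (isOpen_Ioo.mem_nhds hy1))
  · intro y hy
    have := Real.hasDerivAt_rpow_const (x := y) (p := b + 1) (Or.inl (ne_of_gt hy.1))
    simpa using this
  · intro y hy
    exact ne_of_gt (mul_pos (by linarith) (Real.rpow_pos_of_pos hy.1 b))
  · have hc : ContinuousOn (fun u : ℝ => ∫ t in (0:ℝ)..u, t ^ (b - 1) * ((1 - t) ^ (a - 1) - 1))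
        (Set.uIcc 0 (1/2)) :=
      intervalIntegral.continuousOn_primitive_interval'
        (intInt_h hb (by norm_num) (by norm_num)) Set.left_mem_uIcc
    have h0 : (0:ℝ) ∈ Set.uIcc (0:ℝ) (1/2) := Set.left_mem_uIcc
    have := (hc 0 h0).tendsto
    rw [intervalIntegral.integral_same] at this
    refine this.mono_left ?_
    rw [Set.uIcc_of_le (by norm_num : (0:ℝ) ≤ 1/2)]
    rw [← nhdsWithin_Ioo_eq_nhdsGT (by norm_num : (0:ℝ) < 1/2)]
    exact nhdsWithin_mono 0 Set.Ioo_subset_Icc_self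
  · have : Tendsto (fun y : ℝ => y ^ (b + 1)) (𝓝 0) (𝓝 ((0:ℝ) ^ (b + 1))) :=
      (Real.continuousAt_rpow_const 0 (b + 1) (Or.inr (by linarith))).tendsto
    rw [Real.zero_rpow (by linarith)] at this
    exact this.mono_left nhdsWithin_le_nhds
  · have key := (slope_one_sub_rpow (a - 1)).mul (tendsto_const_nhds (x := 1/(b+1)))
    have heq : (fun y : ℝ => ((1 - y) ^ (a - 1) - 1) / y * (1 / (b + 1))) =ᶠ[𝓝[>] (0:ℝ)]
        (fun y => y ^ (b - 1) * ((1 - y) ^ (a - 1) - 1) / ((b + 1) * y ^ b)) := by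
      filter_upwards [self_mem_nhdsWithin] with y hy
      have hy0 : (0:ℝ) < y := hy
      have h1 : y ^ (b - 1) = y ^ b / y := by
        rw [← Real.rpow_sub_one (ne_of_gt hy0)]
      rw [h1]
      have hyb : y ^ b ≠ 0 := ne_of_gt (Real.rpow_pos_of_pos hy0 b)
      field_simp
    have := key.congr' heq
    simpa [div_eq_mul_inv, neg_div] using this
end beta

lemma eulerBeta_pos {a b : ℝ} (ha : 0 < a) (hb : 0 < b) : 0 < eulerBeta b a :=
  div_pos (mul_pos (Real.Gamma_pos_of_pos hb) (Real.Gamma_pos_of_pos ha))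
    (Real.Gamma_pos_of_pos (by linarith))

section beta2
variable {a b : ℝ}

lemma L1 (hb : 0 < b) :
    Tendsto (fun y : ℝ => (1 - y) * ((1 - (1 - y) ^ b) / y)) (𝓝[>] (0:ℝ)) (𝓝 b) := by
  have hn : Tendsto (fun y : ℝ => (1 - y)) (𝓝[>] (0:ℝ)) (𝓝 1) := by
    have h0 : Tendsto (fun y : ℝ => 1 - y) (𝓝 0) (𝓝 (1 - 0)) :=
      (continuous_const.sub continuous_id).tendsto 0
    simpa using h0.mono_left (nhdsWithin_le_nhds (s := Ioi (0:ℝ)))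
  have h' : Tendsto (fun y : ℝ => (1 - (1 - y) ^ b) / y) (𝓝[>] (0:ℝ)) (𝓝 b) := by
    have := (slope_one_sub_rpow b).neg
    simp only [neg_neg] at this
    exact this.congr (fun y => by ring)
  simpa using hn.mul h'

lemma hpow1 (hb : 0 < b) :
    Tendsto (fun y : ℝ => (1 - y) ^ (b + 1)) (𝓝[>] (0:ℝ)) (𝓝 1) := by
  have h1 : ContinuousAt (fun y : ℝ => 1 - y) 0 :=
    (continuous_const.sub continuous_id).continuousAt
  have hc : ContinuousAt (fun y : ℝ => (1 - y) ^ (b + 1)) 0 :=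
    ContinuousAt.comp (Real.continuousAt_rpow_const ((1:ℝ) - 0) (b + 1) (Or.inl (by norm_num))) h1
  have := hc.tendsto.mono_left (nhdsWithin_le_nhds (s := Ioi (0:ℝ)))
  simpa using this

lemma L_main (ha : 0 < a) (hb : 0 < b) :
    Tendsto (fun x : ℝ => x * (1 - b * x ^ b *
        ∫ t in (0:ℝ)..(1 / (1 + x)), t ^ (b - 1) * (1 - t) ^ (a - 1))) atTop
      (𝓝 (b * (a + b) / (b + 1))) := by
  set J : ℝ → ℝ := fun y => ∫ t in (0:ℝ)..y, t ^ (b - 1) * ((1 - t) ^ (a - 1) - 1) with hJ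
  set φ : ℝ → ℝ := fun y => (1 - y) * ((1 - (1 - y) ^ b) / y)
      - b * (1 - y) ^ (b + 1) * (J y / y ^ (b + 1)) with hφ
  have Lφ : Tendsto φ (𝓝[>] (0:ℝ)) (𝓝 (b * (a + b) / (b + 1))) := by
    have := (L1 hb).sub (((tendsto_const_nhds (x := b)).mul (hpow1 hb)).mul (L2 ha hb))
    convert this using 2
    field_simp
    ring
  have hcomp : Tendsto (fun x : ℝ => 1 / (1 + x)) atTop (𝓝[>] (0:ℝ)) := by
    rw [tendsto_nhdsWithin_iff]
    constructor
    · have h1 : Tendsto (fun x : ℝ => 1 + x) atTop atTop :=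
        tendsto_atTop_add_const_left _ 1 tendsto_id
      simpa [one_div, Pi.inv_def] using h1.inv_tendsto_atTop
    · filter_upwards [eventually_ge_atTop (0:ℝ)] with x hx
      exact mem_Ioi.mpr (by positivity)
  refine (Lφ.comp hcomp).congr' ?_
  filter_upwards [eventually_ge_atTop (1:ℝ)] with x hx
  have hx0 : (0:ℝ) < x := lt_of_lt_of_le one_pos hx
  have h1x : (0:ℝ) < 1 + x := by linarith
  set y : ℝ := 1 / (1 + x) with hy
  have hy0 : 0 < y := by positivity
  have hy1 : y < 1 := by rw [hy, div_lt_one h1x]; linarith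
  have hxy : x * y = 1 - y := by rw [hy]; field_simp; ring
  have hxeq : x = (1 - y) / y := by rw [eq_div_iff (ne_of_gt hy0)]; exact hxy
  have hyb1 : y ^ (b + 1) ≠ 0 := ne_of_gt (Real.rpow_pos_of_pos hy0 _)
  have hxb1 : x ^ (b + 1) = (1 - y) ^ (b + 1) / y ^ (b + 1) := by
    rw [hxeq, Real.div_rpow (by linarith) (le_of_lt hy0)]
  have hIJ : (∫ t in (0:ℝ)..y, t ^ (b - 1) * (1 - t) ^ (a - 1)) = y ^ b / b + J y := by
    have hadd : (∫ t in (0:ℝ)..y, t ^ (b - 1) * (1 - t) ^ (a - 1)) =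
        (∫ t in (0:ℝ)..y, t ^ (b - 1)) + J y := by
      rw [hJ, ← intervalIntegral.integral_add
        (intervalIntegral.intervalIntegrable_rpow' (by linarith))
        (intInt_h hb (le_of_lt hy0) hy1)]
      congr 1
      ext t
      ring
    rw [hadd, integral_rpow (Or.inl (by linarith))]
    rw [sub_add_cancel, Real.zero_rpow (ne_of_gt hb)]
    ring_nf
  have hxxb : x * x ^ b = x ^ (b + 1) := by
    rw [Real.rpow_add hx0, Real.rpow_one]; ring
  have hxyb : x ^ b * y ^ b = (1 - y) ^ b := by
    rw [← Real.mul_rpow (le_of_lt hx0) (le_of_lt hy0), hxy]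
  show φ y = x * (1 - b * x ^ b * ∫ t in (0:ℝ)..y, t ^ (b - 1) * (1 - t) ^ (a - 1))
  have key : x * (1 - b * x ^ b * (y ^ b / b + J y)) =
      x * (1 - (1 - y) ^ b) - b * x ^ (b + 1) * J y := by
    have h1 : b * x ^ b * (y ^ b / b + J y) = (1 - y) ^ b + b * (x ^ b * J y) := by
      rw [← hxyb]; field_simp
    rw [h1]
    linear_combination (-(b * J y)) * hxxb
  rw [hIJ, key, hφ]
  simp only
  have e2 : (1 - y) * ((1 - (1 - y) ^ b) / y) = x * (1 - (1 - y) ^ b) := by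
    rw [hxeq]; ring
  rw [e2, hxb1]
  field_simp
end beta2

/-- Second-order tail expansion of the Beta distribution of the second kind:
if `R₀ ~ Beta(b,a)` and `R = 1/R₀ - 1`, then
`P(R > x) = x^{-b}/(b B(b,a)) [1 - (a+b)b/((1+b)x) (1+o(1))]` as `x → ∞`. -/
theorem beta_second_kind_tail {Ω : Type*} [MeasureSpace Ω] [IsProbabilityMeasure (ℙ : Measure Ω)]
    (R₀ : Ω → ℝ) (hR₀ : Measurable R₀) (a b : ℝ) (ha : 0 < a) (hb : 0 < b)
    (hlaw : Measure.map R₀ ℙ =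
      (volume : Measure ℝ).withDensity (fun x => ENNReal.ofReal (betaPDF b a x)))
    (R : Ω → ℝ) (hR : ∀ ω, R ω = 1 / R₀ ω - 1) :
    ∃ u : ℝ → ℝ, Tendsto u atTop (𝓝 1) ∧
      ∀ᶠ x in atTop, (ℙ {ω | R ω > x}).toReal =
        x ^ (-b) / (b * eulerBeta b a) * (1 - (a + b) * b / ((1 + b) * x) * u x) := by

  set B : ℝ := eulerBeta b a with hB
  have hBpos : 0 < B := eulerBeta_pos ha hb
  set P : ℝ → ℝ := fun x => (ℙ {ω | R ω > x}).toReal with hP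
  -- step 1 : P x = I (1/(1+x)) / B for x ≥ 1
  have Peq : ∀ x : ℝ, 1 ≤ x →
      P x = (∫ t in (0:ℝ)..(1 / (1 + x)), t ^ (b - 1) * (1 - t) ^ (a - 1)) / B := by
    intro x hx
    have hx0 : (0:ℝ) < x := lt_of_lt_of_le one_pos hx
    have h1x : (0:ℝ) < 1 + x := by linarith
    set y : ℝ := 1 / (1 + x) with hy
    have hy0 : 0 < y := by positivity
    have hy1 : y < 1 := by rw [hy, div_lt_one h1x]; linarith
    have hset : {ω | R ω > x} = R₀ ⁻¹' (Ioo 0 y) := by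
      ext ω
      simp only [mem_setOf_eq, mem_preimage, mem_Ioo, hR ω, gt_iff_lt]
      constructor
      · intro h
        have h' : 1 + x < 1 / R₀ ω := by linarith
        have hr : 0 < R₀ ω := by
          rcases lt_trichotomy (R₀ ω) 0 with h0 | h0 | h0
          · have := div_neg_of_pos_of_neg one_pos h0; linarith
          · rw [h0] at h'; simp at h'; linarith
          · exact h0
        refine ⟨hr, ?_⟩
        have h2 : (1 + x) * R₀ ω < 1 := (lt_div_iff₀ hr).mp h'
        rw [hy, lt_div_iff₀ h1x]
        nlinarith
      · rintro ⟨hr, hlt⟩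
        rw [hy, lt_div_iff₀ h1x] at hlt
        have h3 : 1 + x < 1 / R₀ ω := (lt_div_iff₀ hr).mpr (by nlinarith)
        linarith
    have hmeas : ℙ {ω | R ω > x} = ∫⁻ t in Ioo 0 y, ENNReal.ofReal (betaPDF b a t) := by
      rw [hset, ← Measure.map_apply hR₀ measurableSet_Ioo, hlaw,
        withDensity_apply _ measurableSet_Ioo]
    have hcongr : ∫⁻ t in Ioo 0 y, ENNReal.ofReal (betaPDF b a t) =
        ∫⁻ t in Ioo 0 y, ENNReal.ofReal (t ^ (b - 1) * (1 - t) ^ (a - 1) / B) := by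
      apply setLIntegral_congr_fun measurableSet_Ioo
      intro t ht
      show ENNReal.ofReal (_root_.betaPDF b a t) = ENNReal.ofReal (t ^ (b - 1) * (1 - t) ^ (a - 1) / B)
      rw [_root_.betaPDF, if_pos ⟨ht.1, lt_trans ht.2 hy1⟩, hB, eulerBeta]
    have hnn : ∀ t ∈ Ioo (0:ℝ) y, 0 ≤ t ^ (b - 1) * (1 - t) ^ (a - 1) / B := by
      intro t ht
      apply div_nonneg _ hBpos.le
      exact mul_nonneg (Real.rpow_nonneg ht.1.le _)
        (Real.rpow_nonneg (by nlinarith [ht.2] : (0:ℝ) ≤ 1 - t) _)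
    have hInt : IntegrableOn (fun t : ℝ => t ^ (b - 1) * (1 - t) ^ (a - 1) / B)
        (Ioo 0 y) volume := by
      have h1 : IntegrableOn (fun t : ℝ => t ^ (b - 1) * (1 - t) ^ (a - 1)) (Ioc 0 y) volume :=
        (intervalIntegrable_iff_integrableOn_Ioc_of_le hy0.le).mp (intInt_f (a := a) hb hy0.le hy1)
      exact (h1.mono_set Ioo_subset_Ioc_self).div_const B
    have hofReal : ∫⁻ t in Ioo 0 y, ENNReal.ofReal (t ^ (b - 1) * (1 - t) ^ (a - 1) / B) =
        ENNReal.ofReal (∫ t in Ioo 0 y, t ^ (b - 1) * (1 - t) ^ (a - 1) / B) := by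
      rw [← ofReal_integral_eq_lintegral_ofReal hInt]
      filter_upwards [ae_restrict_mem measurableSet_Ioo] with t ht
      exact hnn t ht
    rw [hP]
    simp only
    rw [hmeas, hcongr, hofReal, ENNReal.toReal_ofReal
      (setIntegral_nonneg measurableSet_Ioo hnn)]
    rw [← integral_Ioc_eq_integral_Ioo, ← intervalIntegral.integral_of_le hy0.le,
      intervalIntegral.integral_div]
  -- the correction function u
  refine ⟨fun x => x * (1 - P x * (b * B) * x ^ b) * ((1 + b) / ((a + b) * b)), ?_, ?_⟩
  · have h1 := (L_main ha hb).mul_const ((1 + b) / ((a + b) * b))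
    have hval : b * (a + b) / (b + 1) * ((1 + b) / ((a + b) * b)) = 1 := by
      field_simp
      ring
    rw [hval] at h1
    refine h1.congr' ?_
    filter_upwards [eventually_ge_atTop (1:ℝ)] with x hx
    rw [Peq x hx]
    congr 2
    field_simp
  · filter_upwards [eventually_ge_atTop (1:ℝ)] with x hx
    have hx0 : (0:ℝ) < x := lt_of_lt_of_le one_pos hx
    have hxb : (0:ℝ) < x ^ b := Real.rpow_pos_of_pos hx0 b
    have hneg : x ^ (-b) = (x ^ b)⁻¹ := Real.rpow_neg hx0.le b
    rw [hneg]
    have hab : (0:ℝ) < a + b := by linarith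
    have h1b : (0:ℝ) < 1 + b := by linarith
    field_simp
    ring
end

section
/- If R and S are independent with R ~ Beta(a₁,b₁) and S ~ Beta(a₂,b₂) where a₂+b₂ = a₁, then the product X = RS has the Beta(a₂, b₁+b₂) distribution. -/
open Filter MeasureTheory ProbabilityTheory Real Topology Set ENNReal

lemma real_betaIntegral {u v : ℝ} (hu : 0 < u) (hv : 0 < v) :
    ∫ x in (0:ℝ)..1, x ^ (u-1) * (1-x) ^ (v-1) = Real.Gamma u * Real.Gamma v / Real.Gamma (u+v) := by
  have h := Complex.Gamma_mul_Gamma_eq_betaIntegral (s := u) (t := v) (by simpa using hu) (by simpa using hv)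
  rw [Complex.betaIntegral] at h
  have heq : ∀ x ∈ uIcc (0:ℝ) 1, ((x:ℂ) ^ ((u:ℂ)-1) * (1-(x:ℂ)) ^ ((v:ℂ)-1)) = ((x ^ (u-1) * (1-x) ^ (v-1) : ℝ) : ℂ) := by
    intro x hx
    rw [uIcc_of_le (by norm_num)] at hx
    rw [show ((u:ℂ)-1) = ((u-1:ℝ):ℂ) by push_cast; ring,
        show ((v:ℂ)-1) = ((v-1:ℝ):ℂ) by push_cast; ring,
        show (1-(x:ℂ)) = ((1-x:ℝ):ℂ) by push_cast; ring,
        ← Complex.ofReal_cpow hx.1, ← Complex.ofReal_cpow (by linarith [hx.2]),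
        ← Complex.ofReal_mul]
  rw [intervalIntegral.integral_congr heq, intervalIntegral.integral_ofReal,
      Complex.Gamma_ofReal, Complex.Gamma_ofReal, ← Complex.ofReal_add,
      Complex.Gamma_ofReal, ← Complex.ofReal_mul, ← Complex.ofReal_mul,
      Complex.ofReal_inj] at h
  have hG : Real.Gamma (u+v) ≠ 0 := (Real.Gamma_pos_of_pos (by linarith)).ne'
  field_simp [h]
  rw [h]; ring

lemma beta_intervalIntegrable {u v : ℝ} (hu : 0 < u) (hv : 0 < v) :
    IntegrableOn (fun x : ℝ => x ^ (u-1) * (1-x) ^ (v-1)) (Ioc 0 1) volume := by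
  have h := Complex.betaIntegral_convergent (u := u) (v := v) (by simpa using hu) (by simpa using hv)
  rw [intervalIntegrable_iff, uIoc_of_le (by norm_num : (0:ℝ) ≤ 1)] at h
  have := h.norm
  refine MeasureTheory.IntegrableOn.congr_fun this (fun x hx => ?_) measurableSet_Ioc
  have hx0 : (0:ℝ) ≤ x := le_of_lt hx.1
  have hx1 : (0:ℝ) ≤ 1 - x := by linarith [hx.2]
  simp only [norm_mul]
  rw [show ((u:ℂ)-1) = ((u-1:ℝ):ℂ) by push_cast; ring,
      show ((v:ℂ)-1) = ((v-1:ℝ):ℂ) by push_cast; ring,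
      show (1-(x:ℂ)) = ((1-x:ℝ):ℂ) by push_cast; ring,
      ← Complex.ofReal_cpow hx0, ← Complex.ofReal_cpow hx1]
  rw [Complex.norm_real, Complex.norm_real, Real.norm_of_nonneg (Real.rpow_nonneg hx0 _),
      Real.norm_of_nonneg (Real.rpow_nonneg hx1 _)]

lemma lintegral_Ioo_beta {u v : ℝ} (hu : 0 < u) (hv : 0 < v) :
    ∫⁻ x in Ioo (0:ℝ) 1, ENNReal.ofReal (x ^ (u-1) * (1-x) ^ (v-1)) =
      ENNReal.ofReal (Real.Gamma u * Real.Gamma v / Real.Gamma (u+v)) := by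
  rw [Measure.restrict_congr_set Ioo_ae_eq_Ioc,
      ← ofReal_integral_eq_lintegral_ofReal (beta_intervalIntegrable hu hv)
        (by filter_upwards [ae_restrict_mem measurableSet_Ioc] with x hx
            exact mul_nonneg (Real.rpow_nonneg hx.1.le _) (Real.rpow_nonneg (by linarith [hx.2]) _)),
      ← intervalIntegral.integral_of_le (by norm_num : (0:ℝ) ≤ 1), real_betaIntegral hu hv]

lemma lintegral_affine' {c : ℝ} (d : ℝ) (hc : c ≠ 0) {f : ℝ → ℝ≥0∞} (hf : Measurable f) :
    ∫⁻ t, f (d + c*t) = ENNReal.ofReal (|c⁻¹|) * ∫⁻ r, f r := by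
  have hmap : Measure.map (fun t : ℝ => d + c*t) volume = ENNReal.ofReal (|c⁻¹|) • volume := by
    rw [show (fun t : ℝ => d + c*t) = ((d + ·) ∘ (c * ·)) from rfl,
        ← Measure.map_map (measurable_const_add d) (measurable_const_mul c),
        Real.map_volume_mul_left hc, Measure.map_smul, map_add_left_eq_self]
  rw [← lintegral_map hf (by fun_prop), hmap, lintegral_smul_measure, smul_eq_mul]

lemma lintegral_Ioo_shifted {p q x : ℝ} (hp : 0 < p) (hq : 0 < q) (hx : x < 1) :
    ∫⁻ r in Ioo x 1, ENNReal.ofReal ((1-r) ^ (p-1) * (r-x) ^ (q-1)) =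
      ENNReal.ofReal ((1-x) ^ (p+q-1) * (Real.Gamma q * Real.Gamma p / Real.Gamma (q+p))) := by
  have h1x : (0:ℝ) < 1 - x := by linarith
  set ψ : ℝ → ℝ≥0∞ := fun r => ENNReal.ofReal ((1-r) ^ (p-1) * (r-x) ^ (q-1)) with hψ
  set χ : ℝ → ℝ≥0∞ := (Ioo x 1).indicator ψ with hχ
  have hψm : Measurable ψ := by fun_prop
  have hχm : Measurable χ := hψm.indicator measurableSet_Ioo
  have key := lintegral_affine' (c := 1-x) x h1x.ne' hχm
  rw [abs_of_pos (inv_pos.mpr h1x)] at key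
  have hLHS : ∫⁻ r in Ioo x 1, ψ r = ∫⁻ r, χ r := (lintegral_indicator measurableSet_Ioo ψ).symm
  -- pointwise computation of χ (x + (1-x)*t)
  have hpt : ∀ t : ℝ, χ (x + (1-x)*t) =
      (Ioo (0:ℝ) 1).indicator (fun t => ENNReal.ofReal ((1-x) ^ (p-1) * (1-x) ^ (q-1)) *
        ENNReal.ofReal (t ^ (q-1) * (1-t) ^ (p-1))) t := by
    intro t
    have hmem : x + (1-x)*t ∈ Ioo x 1 ↔ t ∈ Ioo (0:ℝ) 1 := by
      constructor
      · rintro ⟨h1, h2⟩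
        constructor
        · nlinarith
        · nlinarith
      · rintro ⟨h1, h2⟩
        constructor
        · nlinarith
        · nlinarith
    rw [hχ]
    by_cases ht : t ∈ Ioo (0:ℝ) 1
    · rw [indicator_of_mem (hmem.mpr ht), indicator_of_mem ht, hψ]
      have ht1 : (0:ℝ) ≤ t := ht.1.le
      have ht2 : (0:ℝ) ≤ 1 - t := by linarith [ht.2]
      simp only
      rw [show (1 - (x + (1-x)*t)) = (1-x)*(1-t) by ring,
          show (x + (1-x)*t - x) = (1-x)*t by ring,
          Real.mul_rpow h1x.le ht2, Real.mul_rpow h1x.le ht1, ← ENNReal.ofReal_mul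
            (by positivity)]
      ring_nf
    · rw [indicator_of_notMem (fun hm => ht (hmem.mp hm)), indicator_of_notMem ht]
  calc ∫⁻ r in Ioo x 1, ψ r = ∫⁻ r, χ r := hLHS
    _ = ENNReal.ofReal (1-x) * ∫⁻ t, χ (x + (1-x)*t) := by
          rw [key, ← mul_assoc, ← ENNReal.ofReal_mul h1x.le, mul_inv_cancel₀ h1x.ne',
              ENNReal.ofReal_one, one_mul]
    _ = ENNReal.ofReal (1-x) * (ENNReal.ofReal ((1-x) ^ (p-1) * (1-x) ^ (q-1)) *
          ∫⁻ t in Ioo (0:ℝ) 1, ENNReal.ofReal (t ^ (q-1) * (1-t) ^ (p-1))) := by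
          rw [lintegral_congr hpt, lintegral_indicator measurableSet_Ioo,
              lintegral_const_mul' _ _ ENNReal.ofReal_ne_top]
    _ = ENNReal.ofReal ((1-x) ^ (p+q-1) * (Real.Gamma q * Real.Gamma p / Real.Gamma (q+p))) := by
          rw [lintegral_Ioo_beta hq hp, ← ENNReal.ofReal_mul (by positivity),
              ← ENNReal.ofReal_mul h1x.le]
          congr 1
          rw [show (1-x) * ((1-x) ^ (p-1) * (1-x) ^ (q-1) * _) =
              ((1-x) ^ (1:ℝ) * ((1-x) ^ (p-1) * (1-x) ^ (q-1))) *
              (Real.Gamma q * Real.Gamma p / Real.Gamma (q+p)) by rw [Real.rpow_one]; ring,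
              ← Real.rpow_add h1x, ← Real.rpow_add h1x]
          ring_nf

lemma measurable_betaPDF (a b : ℝ) : Measurable (_root_.betaPDF a b) := by
  unfold _root_.betaPDF
  have : ∀ x : ℝ, (0 < x ∧ x < 1) ↔ x ∈ Ioo (0:ℝ) 1 := fun x => Iff.rfl
  refine Measurable.ite (measurableSet_Ioo (a := (0:ℝ)) (b := 1)) ?_ measurable_const
  fun_prop

lemma betaPDF_nonneg {a b : ℝ} (ha : 0 < a) (hb : 0 < b) (x : ℝ) : 0 ≤ _root_.betaPDF a b x := by
  unfold _root_.betaPDF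
  split_ifs with h
  · have := Real.Gamma_pos_of_pos ha
    have := Real.Gamma_pos_of_pos hb
    have := Real.Gamma_pos_of_pos (add_pos ha hb)
    have h1 : (0:ℝ) ≤ x := h.1.le
    have h2 : (0:ℝ) ≤ 1 - x := by linarith [h.2]
    positivity
  · exact le_refl _

lemma kernel_eq {a₁ b₁ a₂ b₂ : ℝ} (ha₁ : 0 < a₁) (hb₁ : 0 < b₁) (ha₂ : 0 < a₂) (hb₂ : 0 < b₂)
    (hsum : a₂ + b₂ = a₁) (x : ℝ) :
    ∫⁻ r, ENNReal.ofReal (betaPDF a₁ b₁ r) *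
        (ENNReal.ofReal (betaPDF a₂ b₂ (x * r⁻¹)) * ENNReal.ofReal r⁻¹) ∂volume
      = ENNReal.ofReal (betaPDF a₂ (b₁+b₂) x) := by
  have hΓa₁ := Real.Gamma_pos_of_pos ha₁
  have hΓb₁ := Real.Gamma_pos_of_pos hb₁
  have hΓa₂ := Real.Gamma_pos_of_pos ha₂
  have hΓb₂ := Real.Gamma_pos_of_pos hb₂
  have hΓa₁b₁ := Real.Gamma_pos_of_pos (add_pos ha₁ hb₁)
  have hΓa₂b₂ := Real.Gamma_pos_of_pos (add_pos ha₂ hb₂)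
  have hΓb₁b₂ := Real.Gamma_pos_of_pos (add_pos hb₁ hb₂)
  have hΓab := Real.Gamma_pos_of_pos (add_pos ha₂ (add_pos hb₁ hb₂))
  set B₁ : ℝ := Real.Gamma a₁ * Real.Gamma b₁ / Real.Gamma (a₁ + b₁) with hB₁
  set B₂ : ℝ := Real.Gamma a₂ * Real.Gamma b₂ / Real.Gamma (a₂ + b₂) with hB₂
  have hB₁pos : 0 < B₁ := by positivity
  have hB₂pos : 0 < B₂ := by positivity
  by_cases hx : 0 < x ∧ x < 1
  · -- main case
    set C : ℝ := x ^ (a₂-1) / (B₁ * B₂) with hC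
    have hCnn : 0 ≤ C := div_nonneg (Real.rpow_nonneg hx.1.le _) (by positivity)
    have hpt : ∀ r : ℝ, ENNReal.ofReal (betaPDF a₁ b₁ r) *
        (ENNReal.ofReal (betaPDF a₂ b₂ (x * r⁻¹)) * ENNReal.ofReal r⁻¹) =
        (Ioo x 1).indicator
          (fun r => ENNReal.ofReal (C * ((1-r) ^ (b₁-1) * (r-x) ^ (b₂-1)))) r := by
      intro r
      by_cases hr : r ∈ Ioo x 1
      · have hr0 : 0 < r := lt_trans hx.1 hr.1
        have hrinv : 0 < r⁻¹ := inv_pos.mpr hr0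
        have hxr0 : 0 < x * r⁻¹ := mul_pos hx.1 hrinv
        have hxr1 : x * r⁻¹ < 1 := by
          rw [← div_eq_mul_inv, div_lt_one hr0]; exact hr.1
        rw [indicator_of_mem hr,
            ← ENNReal.ofReal_mul (betaPDF_nonneg ha₂ hb₂ _),
            ← ENNReal.ofReal_mul (betaPDF_nonneg ha₁ hb₁ _)]
        congr 1
        unfold _root_.betaPDF
        rw [if_pos ⟨hr0, hr.2⟩, if_pos ⟨hxr0, hxr1⟩]
        have e2 : (1 - x * r⁻¹) = (r - x) * r⁻¹ := by field_simp
        rw [e2, Real.mul_rpow hx.1.le hrinv.le, Real.mul_rpow (by linarith [hr.1] : (0:ℝ) ≤ r - x) hrinv.le,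
            Real.inv_rpow hr0.le, Real.inv_rpow hr0.le,
            show a₁ - 1 = (a₂-1) + ((b₂-1) + 1) by linarith,
            Real.rpow_add hr0, Real.rpow_add hr0, Real.rpow_one, hC]
        have h1 : r ^ (a₂-1) ≠ 0 := (Real.rpow_pos_of_pos hr0 _).ne'
        have h2 : r ^ (b₂-1) ≠ 0 := (Real.rpow_pos_of_pos hr0 _).ne'
        have n1 : Real.Gamma (a₁+b₁) ≠ 0 := hΓa₁b₁.ne'
        have n2 : Real.Gamma (a₂+b₂) ≠ 0 := hΓa₂b₂.ne'
        rw [hB₁, hB₂]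
        field_simp
      · rw [indicator_of_notMem hr]
        by_cases hr' : 0 < r ∧ r < 1
        · have hrx : r ≤ x := by
            by_contra hcon
            exact hr ⟨lt_of_not_ge hcon, hr'.2⟩
          have hge : 1 ≤ x * r⁻¹ := by
            rw [← div_eq_mul_inv, le_div_iff₀ hr'.1, one_mul]; exact hrx
          have : _root_.betaPDF a₂ b₂ (x * r⁻¹) = 0 := by
            unfold _root_.betaPDF; rw [if_neg (fun hc => absurd hc.2 (not_lt.mpr hge))]
          rw [this, ENNReal.ofReal_zero, zero_mul, mul_zero]
        · have : _root_.betaPDF a₁ b₁ r = 0 := by unfold _root_.betaPDF; rw [if_neg hr']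
          rw [this, ENNReal.ofReal_zero, zero_mul]
    rw [lintegral_congr hpt, lintegral_indicator measurableSet_Ioo]
    simp_rw [ENNReal.ofReal_mul hCnn]
    rw [lintegral_const_mul' _ _ ENNReal.ofReal_ne_top,
        lintegral_Ioo_shifted hb₁ hb₂ hx.2, ← ENNReal.ofReal_mul hCnn]
    unfold _root_.betaPDF
    rw [if_pos hx]
    congr 1
    subst hsum
    rw [hC, hB₁, hB₂, show a₂ + b₂ + b₁ = a₂ + (b₁ + b₂) by ring, show b₂ + b₁ = b₁ + b₂ by ring]
    field_simp
  · -- x outside (0,1)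
    have hpt : ∀ r : ℝ, ENNReal.ofReal (betaPDF a₁ b₁ r) *
        (ENNReal.ofReal (betaPDF a₂ b₂ (x * r⁻¹)) * ENNReal.ofReal r⁻¹) = 0 := by
      intro r
      by_cases hr : 0 < r ∧ r < 1
      · have hrinv : 0 < r⁻¹ := inv_pos.mpr hr.1
        have : _root_.betaPDF a₂ b₂ (x * r⁻¹) = 0 := by
          unfold _root_.betaPDF
          rw [if_neg]
          intro hc
          rcases not_and_or.mp hx with h | h
          · have hx0 : x ≤ 0 := not_lt.mp h
            exact absurd hc.1 (not_lt.mpr (mul_nonpos_iff.mpr (Or.inr ⟨hx0, hrinv.le⟩)))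
          · have hx1 : 1 ≤ x := not_lt.mp h
            have h1r : 1 < r⁻¹ := by
              rw [lt_inv_comm₀] <;> simp [hr.1, hr.2]
            have : 1 ≤ x * r⁻¹ := by nlinarith
            exact absurd hc.2 (not_lt.mpr this)
        rw [this, ENNReal.ofReal_zero, zero_mul, mul_zero]
      · have : _root_.betaPDF a₁ b₁ r = 0 := by unfold _root_.betaPDF; rw [if_neg hr]
        rw [this, ENNReal.ofReal_zero, zero_mul]
    rw [lintegral_congr hpt, lintegral_zero]
    unfold _root_.betaPDF
    rw [if_neg hx, ENNReal.ofReal_zero]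

/-- If `R ~ Beta(a₁,b₁)` and `S ~ Beta(a₂,b₂)` are independent with
`a₂ + b₂ = a₁`, then `R S ~ Beta(a₂, b₁ + b₂)`. -/
theorem beta_product_beta {Ω : Type*} [MeasureSpace Ω] [IsProbabilityMeasure (ℙ : Measure Ω)]
    (R S : Ω → ℝ) (hRm : Measurable R) (hSm : Measurable S)
    (hindep : IndepFun R S)
    (a₁ b₁ a₂ b₂ : ℝ) (ha₁ : 0 < a₁) (hb₁ : 0 < b₁) (ha₂ : 0 < a₂) (hb₂ : 0 < b₂)
    (hsum : a₂ + b₂ = a₁)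
    (hRlaw : Measure.map R ℙ =
      (volume : Measure ℝ).withDensity (fun x => ENNReal.ofReal (betaPDF a₁ b₁ x)))
    (hSlaw : Measure.map S ℙ =
      (volume : Measure ℝ).withDensity (fun x => ENNReal.ofReal (betaPDF a₂ b₂ x))) :
    Measure.map (fun ω => R ω * S ω) ℙ =
      (volume : Measure ℝ).withDensity (fun x => ENNReal.ofReal (betaPDF a₂ (b₁ + b₂) x)) := by
  set f₁ : ℝ → ℝ≥0∞ := fun x => ENNReal.ofReal (betaPDF a₁ b₁ x) with hf₁
  set f₂ : ℝ → ℝ≥0∞ := fun x => ENNReal.ofReal (betaPDF a₂ b₂ x) with hf₂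
  have hfm₁ : Measurable f₁ := ENNReal.measurable_ofReal.comp (measurable_betaPDF a₁ b₁)
  have hfm₂ : Measurable f₂ := ENNReal.measurable_ofReal.comp (measurable_betaPDF a₂ b₂)
  have hm : Measurable (fun p : ℝ × ℝ => p.1 * p.2) := measurable_fst.mul measurable_snd
  have hpair : Measure.map (fun ω => (R ω, S ω)) ℙ =
      (Measure.map R ℙ).prod (Measure.map S ℙ) :=
    (indepFun_iff_map_prod_eq_prod_map_map hRm.aemeasurable hSm.aemeasurable).mp hindep
  have hmul : Measure.map (fun ω => R ω * S ω) ℙ =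
      Measure.map (fun p : ℝ × ℝ => p.1 * p.2) ((Measure.map R ℙ).prod (Measure.map S ℙ)) := by
    rw [← hpair, Measure.map_map hm (hRm.prodMk hSm)]
    rfl
  refine Measure.ext fun A hA => ?_
  set g : ℝ → ℝ≥0∞ := A.indicator 1 with hg
  have hgm : Measurable g := measurable_one.indicator hA
  have hgne : ∀ x, g x ≠ ⊤ := by
    intro x
    rw [hg]
    by_cases h : x ∈ A
    · rw [indicator_of_mem h]; exact ENNReal.one_ne_top
    · rw [indicator_of_notMem h]; exact ENNReal.zero_ne_top
  rw [hmul, Measure.map_apply hm hA, Measure.prod_apply (hm hA)]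
  have hsec : ∀ r : ℝ, (Measure.map S ℙ) (Prod.mk r ⁻¹' ((fun p : ℝ × ℝ => p.1 * p.2) ⁻¹' A)) =
      ∫⁻ s, g (r * s) * f₂ s ∂volume := by
    intro r
    have hE : MeasurableSet {s : ℝ | r * s ∈ A} := (measurable_const_mul r) hA
    rw [show Prod.mk r ⁻¹' ((fun p : ℝ × ℝ => p.1 * p.2) ⁻¹' A) = {s : ℝ | r * s ∈ A} from rfl,
        hSlaw, withDensity_apply _ hE, ← lintegral_indicator hE]
    refine lintegral_congr fun s => ?_
    by_cases h : r * s ∈ A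
    · rw [indicator_of_mem (show s ∈ {s : ℝ | r * s ∈ A} from h), hg,
          indicator_of_mem h, Pi.one_apply, one_mul]
    · rw [indicator_of_notMem (show s ∉ {s : ℝ | r * s ∈ A} from h), hg,
          indicator_of_notMem h, zero_mul]
  rw [lintegral_congr hsec]
  have hFm : Measurable fun r : ℝ => ∫⁻ s, g (r * s) * f₂ s ∂volume := by
    have : Measurable (Function.uncurry fun r s : ℝ => g (r * s) * f₂ s) :=
      ((hgm.comp (measurable_fst.mul measurable_snd)).mul (hfm₂.comp measurable_snd))
    exact this.lintegral_prod_right'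
  rw [hRlaw, lintegral_withDensity_eq_lintegral_mul volume hfm₁ hFm]
  -- substitution in the inner integral
  have hsub : ∀ r : ℝ, (f₁ * fun r => ∫⁻ s, g (r * s) * f₂ s ∂volume) r =
      ∫⁻ x, f₁ r * (g x * (f₂ (x * r⁻¹) * ENNReal.ofReal r⁻¹)) ∂volume := by
    intro r
    simp only [Pi.mul_apply]
    by_cases hr : 0 < r
    · have φm : Measurable fun x : ℝ => g x * f₂ (x * r⁻¹) :=
        hgm.mul (hfm₂.comp (measurable_mul_const r⁻¹))
      have key := lintegral_affine' (c := r) 0 hr.ne' φm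
      simp only [zero_add] at key
      have hcomp : ∀ t : ℝ, g (r * t) * f₂ (r * t * r⁻¹) = g (r * t) * f₂ t := by
        intro t
        rw [mul_comm r t, mul_assoc, mul_inv_cancel₀ hr.ne', mul_one]
      calc f₁ r * ∫⁻ s, g (r * s) * f₂ s ∂volume
          = f₁ r * ∫⁻ s, g (r * s) * f₂ (r * s * r⁻¹) ∂volume := by
            simp_rw [hcomp]
        _ = f₁ r * (ENNReal.ofReal (|r⁻¹|) * ∫⁻ x, g x * f₂ (x * r⁻¹) ∂volume) := by
            rw [← key]
        _ = ∫⁻ x, f₁ r * (g x * (f₂ (x * r⁻¹) * ENNReal.ofReal r⁻¹)) ∂volume := by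
            rw [abs_of_pos (inv_pos.mpr hr), ← lintegral_const_mul' _ _ ENNReal.ofReal_ne_top,
                ← lintegral_const_mul' (f₁ r) _ (ENNReal.ofReal_ne_top)]
            exact lintegral_congr fun x => by ring
    · have hz : f₁ r = 0 := by
        rw [hf₁]
        simp only
        unfold _root_.betaPDF
        rw [if_neg (fun hc => hr hc.1), ENNReal.ofReal_zero]
      rw [hz, zero_mul]
      symm
      simp_rw [zero_mul]
      exact lintegral_zero
  rw [lintegral_congr hsub]
  have humeas : Measurable (Function.uncurry fun r x : ℝ =>
      f₁ r * (g x * (f₂ (x * r⁻¹) * ENNReal.ofReal r⁻¹))) := by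
    refine (hfm₁.comp measurable_fst).mul ((hgm.comp measurable_snd).mul (Measurable.mul (f := fun p : ℝ × ℝ => f₂ (p.2 * p.1⁻¹)) (g := fun p : ℝ × ℝ => ENNReal.ofReal p.1⁻¹) ?_ ?_))
    · exact hfm₂.comp (measurable_snd.mul measurable_fst.inv)
    · exact ENNReal.measurable_ofReal.comp measurable_fst.inv
  rw [lintegral_lintegral_swap humeas.aemeasurable]
  have hinner : ∀ x : ℝ, ∫⁻ r, f₁ r * (g x * (f₂ (x * r⁻¹) * ENNReal.ofReal r⁻¹)) ∂volume =
      g x * ENNReal.ofReal (betaPDF a₂ (b₁ + b₂) x) := by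
    intro x
    rw [← kernel_eq ha₁ hb₁ ha₂ hb₂ hsum x, ← lintegral_const_mul' (g x) _ (hgne x)]
    exact lintegral_congr fun r => by ring
  rw [lintegral_congr hinner, withDensity_apply _ hA, ← lintegral_indicator hA]
  refine lintegral_congr fun x => ?_
  by_cases h : x ∈ A
  · rw [hg, indicator_of_mem h, indicator_of_mem h, Pi.one_apply, one_mul]
  · rw [hg, indicator_of_notMem h, indicator_of_notMem h, zero_mul]
end

section
/- First-order Value-at-Risk asymptotics under deflation: If F̄ is regularly varying at infinity with index −α (α>0) and S ∈ (0,1) is independent of R, then VaR_p(RS) / VaR_p(R) → (E[S^α])^{1/α} as p ↑ 1. -/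
open Filter MeasureTheory ProbabilityTheory Real Topology Set

/-- Value-at-Risk at level `p` of a random variable `Y`:
`VaR_p(Y) = inf {y : P(Y ≤ y) ≥ p}`. -/
noncomputable def VaR {Ω : Type*} [MeasureSpace Ω] (Y : Ω → ℝ) (p : ℝ) : ℝ :=
  sInf {y : ℝ | p ≤ (ℙ {ω | Y ω ≤ y}).toReal}

section helpers
variable {Ω : Type*} [MeasureSpace Ω] [IsProbabilityMeasure (ℙ : Measure Ω)]
variable {Y : Ω → ℝ}

lemma cdf_mono (Y : Ω → ℝ) : Monotone fun t => (ℙ {ω | Y ω ≤ t}).toReal :=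
  fun a b hab => ENNReal.toReal_mono (measure_ne_top _ _)
    (measure_mono fun ω h => le_trans h hab)

lemma surv_anti (Y : Ω → ℝ) : Antitone fun t => (ℙ {ω | Y ω > t}).toReal :=
  fun a b hab => ENNReal.toReal_mono (measure_ne_top _ _)
    (measure_mono fun ω h => lt_of_le_of_lt hab h)

lemma cdf_eq_one_sub (hY : Measurable Y) (t : ℝ) :
    (ℙ {ω | Y ω ≤ t}).toReal = 1 - (ℙ {ω | Y ω > t}).toReal := by
  have hs : MeasurableSet {ω | Y ω > t} := hY measurableSet_Ioi
  have h1 : {ω | Y ω ≤ t} = {ω | Y ω > t}ᶜ := by ext ω; simp [not_lt]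
  rw [h1, measure_compl hs (measure_ne_top _ _), measure_univ,
    ENNReal.toReal_sub_of_le prob_le_one ENNReal.one_ne_top, ENNReal.toReal_one]

lemma exists_cdf_ge (hY : Measurable Y) {p : ℝ} (hp : p < 1) :
    ∃ y : ℝ, p ≤ (ℙ {ω | Y ω ≤ y}).toReal := by
  have hmono : Monotone fun n : ℕ => {ω | Y ω ≤ (n : ℝ)} := by
    intro m n hmn ω h
    simp only [mem_setOf_eq] at h ⊢
    exact le_trans h (by exact_mod_cast hmn)
  have hU : ⋃ n : ℕ, {ω | Y ω ≤ (n : ℝ)} = univ := by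
    ext ω; simp only [mem_iUnion, mem_univ, iff_true]
    obtain ⟨n, hn⟩ := exists_nat_ge (Y ω)
    exact ⟨n, hn⟩
  have h := tendsto_measure_iUnion_atTop (μ := (ℙ : Measure Ω)) hmono
  rw [hU, measure_univ] at h
  have h2 : Tendsto (fun n : ℕ => (ℙ {ω | Y ω ≤ (n : ℝ)}).toReal) atTop (𝓝 1) := by
    have := (ENNReal.tendsto_toReal ENNReal.one_ne_top).comp h
    simpa [Function.comp_def] using this
  obtain ⟨n, hn⟩ := (h2.eventually (eventually_ge_nhds hp)).exists
  exact ⟨n, hn⟩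

lemma cdf_ge_of_forall_gt (hY : Measurable Y) {p x : ℝ}
    (h : ∀ y > x, p ≤ (ℙ {ω | Y ω ≤ y}).toReal) : p ≤ (ℙ {ω | Y ω ≤ x}).toReal := by
  set A : ℕ → Set Ω := fun n => {ω | Y ω ≤ x + 1 / (n + 1)} with hA
  have hanti : Antitone A := by
    intro m n hmn ω hω
    simp only [hA, mem_setOf_eq] at hω ⊢
    have hc : (m:ℝ) ≤ n := Nat.cast_le.2 hmn
    refine le_trans hω (by gcongr)
  have hI : ⋂ n, A n = {ω | Y ω ≤ x} := by
    ext ω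
    simp only [mem_iInter, mem_setOf_eq, hA]
    constructor
    · intro hall
      by_contra hlt
      push_neg at hlt
      obtain ⟨n, hn⟩ := exists_nat_one_div_lt (sub_pos.2 hlt)
      exact absurd (hall n) (by push_neg; linarith)
    · intro h0 n
      have : (0:ℝ) < 1 / (n + 1) := by positivity
      linarith
  have ht := tendsto_measure_iInter_atTop (μ := (ℙ : Measure Ω)) (s := A)
    (fun n => (hY measurableSet_Iic).nullMeasurableSet) hanti ⟨0, measure_ne_top _ _⟩
  rw [hI] at ht
  have h2 : Tendsto (fun n : ℕ => (ℙ (A n)).toReal) atTop (𝓝 (ℙ {ω | Y ω ≤ x}).toReal) :=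
    (ENNReal.tendsto_toReal (measure_ne_top _ _)).comp ht
  refine ge_of_tendsto' h2 fun n => h _ (by simp [hA]; positivity)

end helpers

section var
variable {Ω : Type*} [MeasureSpace Ω] [IsProbabilityMeasure (ℙ : Measure Ω)]
variable {Y : Ω → ℝ}

lemma var_bddBelow (hY0 : ∀ ω, 0 ≤ Y ω) {p : ℝ} (hp0 : 0 < p) :
    BddBelow {y : ℝ | p ≤ (ℙ {ω | Y ω ≤ y}).toReal} := by
  refine ⟨0, fun y hy => ?_⟩
  by_contra hlt
  push_neg at hlt
  have : {ω | Y ω ≤ y} = (∅ : Set Ω) := by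
    ext ω; simp only [mem_setOf_eq, mem_empty_iff_false, iff_false, not_le]
    exact lt_of_lt_of_le hlt (hY0 ω)
  simp only [mem_setOf_eq, this, measure_empty, ENNReal.toReal_zero] at hy
  linarith

lemma var_nonempty (hY : Measurable Y) {p : ℝ} (hp1 : p < 1) :
    {y : ℝ | p ≤ (ℙ {ω | Y ω ≤ y}).toReal}.Nonempty :=
  exists_cdf_ge hY hp1

lemma cdf_VaR_ge (hY : Measurable Y) (hY0 : ∀ ω, 0 ≤ Y ω) {p : ℝ} (hp0 : 0 < p) (hp1 : p < 1) :
    p ≤ (ℙ {ω | Y ω ≤ VaR Y p}).toReal := by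
  refine cdf_ge_of_forall_gt hY fun y hy => ?_
  obtain ⟨z, hz, hzy⟩ := (csInf_lt_iff (var_bddBelow hY0 hp0) (var_nonempty hY hp1)).1 hy
  exact le_trans hz (cdf_mono Y hzy.le)

lemma VaR_le (hY0 : ∀ ω, 0 ≤ Y ω) {p y : ℝ} (hp0 : 0 < p)
    (h : p ≤ (ℙ {ω | Y ω ≤ y}).toReal) : VaR Y p ≤ y :=
  csInf_le (var_bddBelow hY0 hp0) h

lemma le_VaR (hY : Measurable Y) {p z : ℝ} (hp1 : p < 1)
    (h : ∀ y, p ≤ (ℙ {ω | Y ω ≤ y}).toReal → z ≤ y) : z ≤ VaR Y p :=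
  le_csInf (var_nonempty hY hp1) h

lemma VaR_tendsto_atTop (hY : Measurable Y)
    (hpos : ∀ t, 0 < (ℙ {ω | Y ω > t}).toReal) :
    Tendsto (fun p => VaR Y p) (𝓝[<] (1:ℝ)) atTop := by
  refine tendsto_atTop.2 fun M => ?_
  set δ := (ℙ {ω | Y ω > M}).toReal with hδ
  have hδ0 : 0 < δ := hpos M
  have hev : ∀ᶠ p in 𝓝[<] (1:ℝ), 1 - δ < p ∧ p < 1 := by
    filter_upwards [Ioo_mem_nhdsLT_of_mem (show (1:ℝ) ∈ Ioc (1-δ) 1 by constructor <;> simp [hδ0, le_refl])]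
      with p hp using ⟨hp.1, hp.2⟩
  filter_upwards [hev] with p hp
  refine le_VaR hY hp.2 fun y hy => ?_
  by_contra hlt
  push_neg at hlt
  have h1 : (ℙ {ω | Y ω ≤ y}).toReal ≤ (ℙ {ω | Y ω ≤ M}).toReal := cdf_mono Y hlt.le
  rw [cdf_eq_one_sub hY M] at h1
  linarith [hp.1, hy]

end var

lemma pos_of_selfdiv {f : ℝ → ℝ} (hf0 : ∀ t, 0 ≤ f t) (hanti : Antitone f)
    (h : Tendsto (fun t => f t / f t) atTop (𝓝 1)) : ∀ t, 0 < f t := by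
  by_contra hc
  push_neg at hc
  obtain ⟨t0, ht0⟩ := hc
  have hz : ∀ t ≥ t0, f t = 0 := fun t ht =>
    le_antisymm (le_trans (hanti ht) ht0) (hf0 t)
  have h0 : Tendsto (fun t => f t / f t) atTop (𝓝 0) := by
    refine Tendsto.congr' ?_ tendsto_const_nhds
    filter_upwards [eventually_ge_atTop t0] with t ht
    simp [hz t ht]
  have h1 : (1:ℝ) = 0 := tendsto_nhds_unique h h0
  norm_num at h1

section breiman
variable {Ω : Type*} [MeasureSpace Ω] [IsProbabilityMeasure (ℙ : Measure Ω)]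

lemma breiman (R S : Ω → ℝ) (hRm : Measurable R) (hSm : Measurable S)
    (hS01 : ∀ ω, S ω ∈ Set.Ioo (0:ℝ) 1) (hindep : IndepFun R S)
    (α : ℝ) (hα : 0 < α)
    (hRV : ∀ s > 0, Tendsto
      (fun t => (ℙ {ω | R ω > t * s}).toReal / (ℙ {ω | R ω > t}).toReal) atTop
      (𝓝 (s ^ (-α))))
    (hFpos : ∀ t, 0 < (ℙ {ω | R ω > t}).toReal) :
    Tendsto (fun t => (ℙ {ω | R ω * S ω > t}).toReal / (ℙ {ω | R ω > t}).toReal) atTop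
      (𝓝 (∫ ω, S ω ^ α ∂ℙ)) := by
  set μS : Measure ℝ := Measure.map S ℙ with hμS
  set μR : Measure ℝ := Measure.map R ℙ with hμR
  haveI : IsProbabilityMeasure μS := Measure.isProbabilityMeasure_map hSm.aemeasurable
  haveI : IsProbabilityMeasure μR := Measure.isProbabilityMeasure_map hRm.aemeasurable
  have hprod : Measure.map (fun ω => (S ω, R ω)) ℙ = μS.prod μR :=
    (ProbabilityTheory.indepFun_iff_map_prod_eq_prod_map_map hSm.aemeasurable
      hRm.aemeasurable).1 hindep.symm
  have hA : ∀ t : ℝ, MeasurableSet {p : ℝ × ℝ | p.1 * p.2 > t} := fun t =>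
    measurableSet_lt measurable_const (measurable_fst.mul measurable_snd)
  have hμRIoi : ∀ u : ℝ, μR (Ioi u) = ℙ {ω | R ω > u} := fun u => by
    rw [hμR, Measure.map_apply hRm measurableSet_Ioi]; rfl
  have hG : ∀ t : ℝ, (ℙ {ω | R ω * S ω > t}).toReal
      = ∫ s, (μR {r | s * r > t}).toReal ∂μS := by
    intro t
    have h1 : {ω | R ω * S ω > t} = (fun ω => (S ω, R ω)) ⁻¹' {p : ℝ × ℝ | p.1 * p.2 > t} := by
      ext ω; simp [mul_comm]
    rw [h1, ← Measure.map_apply (hSm.prodMk hRm) (hA t), hprod, Measure.prod_apply (hA t),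
      ← integral_toReal ((measurable_measure_prodMk_left (hA t)).aemeasurable)
        (ae_of_all _ fun s => measure_lt_top _ _)]
    rfl
  have hSae : ∀ᵐ s ∂μS, s ∈ Ioo (0:ℝ) 1 := by
    rw [hμS]
    exact (ae_map_iff hSm.aemeasurable measurableSet_Ioo).2 (ae_of_all _ hS01)
  have key : Tendsto (fun t => ∫ s, (μR {r | s * r > t}).toReal / (ℙ {ω | R ω > t}).toReal ∂μS)
      atTop (𝓝 (∫ s, s ^ α ∂μS)) := by
    refine tendsto_integral_filter_of_dominated_convergence (fun _ => (1:ℝ))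
      (Eventually.of_forall fun t =>
        ((measurable_measure_prodMk_left (hA t)).ennreal_toReal.div_const
          _).aestronglyMeasurable) ?_ (integrable_const 1) ?_
    · filter_upwards [eventually_ge_atTop (0:ℝ)] with t ht
      filter_upwards [hSae] with s hs
      have hsub : {r : ℝ | s * r > t} ⊆ Ioi t := by
        intro r hr
        simp only [mem_setOf_eq, gt_iff_lt] at hr
        have hr0 : 0 < r := by nlinarith [hs.1, hs.2]
        have : s * r < r := by nlinarith [hs.2]
        exact lt_trans hr this
      have hle : (μR {r | s * r > t}).toReal ≤ (ℙ {ω | R ω > t}).toReal := by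
        rw [← hμRIoi t]
        exact ENNReal.toReal_mono (measure_ne_top _ _) (measure_mono hsub)
      rw [Real.norm_eq_abs, abs_of_nonneg (div_nonneg ENNReal.toReal_nonneg
        (hFpos t).le)]
      exact div_le_one_of_le₀ hle (hFpos t).le
    · filter_upwards [hSae] with s hs
      have hset : ∀ t : ℝ, {r : ℝ | s * r > t} = Ioi (t * s⁻¹) := by
        intro t; ext r
        simp only [mem_setOf_eq, gt_iff_lt, mem_Ioi, ← div_eq_mul_inv]
        rw [div_lt_iff₀ hs.1, mul_comm]
      have heq : (fun t => (μR {r | s * r > t}).toReal / (ℙ {ω | R ω > t}).toReal)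
          = fun t => (ℙ {ω | R ω > t * s⁻¹}).toReal / (ℙ {ω | R ω > t}).toReal := by
        funext t; rw [hset t, hμRIoi]
      rw [heq]
      have hlim := hRV s⁻¹ (inv_pos.2 hs.1)
      have : (s⁻¹ : ℝ) ^ (-α) = s ^ α := by
        rw [Real.rpow_neg (inv_nonneg.2 hs.1.le), Real.inv_rpow hs.1.le, inv_inv]
      rw [this] at hlim
      exact hlim
  have hint : ∫ s, s ^ α ∂μS = ∫ ω, S ω ^ α ∂ℙ := by
    rw [hμS, integral_map hSm.aemeasurable
      ((Real.continuous_rpow_const hα.le).measurable.aestronglyMeasurable)]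
  have heq2 : (fun t => (ℙ {ω | R ω * S ω > t}).toReal / (ℙ {ω | R ω > t}).toReal)
      = fun t => ∫ s, (μR {r | s * r > t}).toReal / (ℙ {ω | R ω > t}).toReal ∂μS := by
    funext t; rw [hG t, integral_div]
  rw [heq2, ← hint]
  exact key

end breiman

/-- First-order Value-at-Risk asymptotics under random deflation. -/
theorem var_first_order {Ω : Type*} [MeasureSpace Ω] [IsProbabilityMeasure (ℙ : Measure Ω)]
    (R S : Ω → ℝ) (hRm : Measurable R) (hSm : Measurable S)
    (hRpos : ∀ ω, 0 ≤ R ω) (hS01 : ∀ ω, S ω ∈ Set.Ioo (0:ℝ) 1)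
    (hindep : IndepFun R S)
    (α : ℝ) (hα : 0 < α)
    (hRV : ∀ s > 0, Tendsto
      (fun t => (ℙ {ω | R ω > t * s}).toReal / (ℙ {ω | R ω > t}).toReal) atTop
      (𝓝 (s ^ (-α)))) :
    Tendsto (fun p => VaR (fun ω => R ω * S ω) p / VaR R p) (𝓝[<] (1:ℝ))
      (𝓝 ((∫ ω, S ω ^ α ∂ℙ) ^ (1 / α))) := by
  set Y : Ω → ℝ := fun ω => R ω * S ω with hY
  have hYm : Measurable Y := hRm.mul hSm
  have hY0 : ∀ ω, 0 ≤ Y ω := fun ω => mul_nonneg (hRpos ω) (hS01 ω).1.le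
  -- survival function of R is everywhere positive
  have hFpos : ∀ t, 0 < (ℙ {ω | R ω > t}).toReal := by
    have h1 := hRV 1 one_pos
    rw [Real.one_rpow] at h1
    refine pos_of_selfdiv (fun t => ENNReal.toReal_nonneg) (surv_anti R) ?_
    simpa using h1
  -- Breiman
  have hBre := breiman R S hRm hSm hS01 hindep α hα hRV hFpos
  set c : ℝ := ∫ ω, S ω ^ α ∂ℙ with hc
  -- positivity of c
  have hαint : Integrable (fun ω => S ω ^ α) ℙ := by
    refine (integrable_const (1:ℝ)).mono'
      (((Real.continuous_rpow_const hα.le).measurable.comp hSm).aestronglyMeasurable) ?_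
    refine ae_of_all _ fun ω => ?_
    rw [Real.norm_eq_abs, abs_of_nonneg (Real.rpow_nonneg (hS01 ω).1.le α)]
    exact Real.rpow_le_one (hS01 ω).1.le (hS01 ω).2.le hα.le
  have hc0 : 0 < c := by
    rw [hc]
    rw [integral_pos_iff_support_of_nonneg (fun ω => Real.rpow_nonneg (hS01 ω).1.le α) hαint]
    have : Function.support (fun ω => S ω ^ α) = univ := by
      ext ω
      simp only [Function.mem_support, mem_univ, iff_true]
      exact (Real.rpow_pos_of_pos (hS01 ω).1 α).ne'
    rw [this, measure_univ]
    norm_num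
  have hBreY : Tendsto (fun t => (ℙ {ω | Y ω > t}).toReal / (ℙ {ω | R ω > t}).toReal)
      atTop (𝓝 c) := hBre
  set L : ℝ := c ^ (1/α) with hLdef
  have hL : 0 < L := Real.rpow_pos_of_pos hc0 _
  have hLα : L ^ α = c := by
    rw [hLdef, ← Real.rpow_mul hc0.le, one_div, inv_mul_cancel₀ hα.ne', Real.rpow_one]
  -- positivity of survival of Y
  have hGpos : ∀ t, 0 < (ℙ {ω | Y ω > t}).toReal := by
    have hev := hBreY.eventually (eventually_gt_nhds (half_lt_self hc0))
    obtain ⟨T, hT⟩ := eventually_atTop.1 hev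
    intro t
    have hTrat := hT (max t T) (le_max_right _ _)
    have hGt : 0 < (ℙ {ω | Y ω > max t T}).toReal := by
      by_contra hc'
      push_neg at hc'
      have : (ℙ {ω | Y ω > max t T}).toReal = 0 := le_antisymm hc' ENNReal.toReal_nonneg
      rw [this] at hTrat
      simp only [zero_div] at hTrat
      linarith [half_pos hc0]
    exact lt_of_lt_of_le hGt (surv_anti Y (le_max_left t T))
  -- VaR tendsto atTop
  have hqR := VaR_tendsto_atTop hRm hFpos
  have hqY := VaR_tendsto_atTop hYm hGpos
  -- regular variation reformulated
  have hRVl : ∀ l : ℝ, 0 < l → Tendsto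
      (fun t => (ℙ {ω | R ω > l * t}).toReal / (ℙ {ω | R ω > t}).toReal) atTop
      (𝓝 (l ^ (-α))) := by
    intro l hl
    have := hRV l hl
    refine this.congr fun t => by rw [mul_comm]
  have hmul : ∀ l : ℝ, 0 < l → Tendsto (fun t : ℝ => l * t) atTop atTop := fun l hl =>
    Tendsto.const_mul_atTop hl tendsto_id
  -- basic eventualities in p
  have hp0ev : ∀ᶠ p in 𝓝[<] (1:ℝ), 0 < p :=
    (eventually_gt_nhds one_pos).filter_mono nhdsWithin_le_nhds
  have hp1ev : ∀ᶠ p in 𝓝[<] (1:ℝ), p < 1 :=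
    eventually_mem_nhdsWithin.mono fun p hp => hp
  refine tendsto_order.2 ⟨?_, ?_⟩
  · -- lower bound
    intro a ha
    obtain ⟨l, hl1, hl2⟩ := exists_between (max_lt ha hL : max a 0 < L)
    have hlpos : 0 < l := lt_of_le_of_lt (le_max_right a 0) hl1
    have hla : a < l := lt_of_le_of_lt (le_max_left a 0) hl1
    have hlac : l ^ α < c := by
      rw [← hLα]
      exact Real.rpow_lt_rpow hlpos.le hl2 hα
    have hcomb : Tendsto (fun t => (ℙ {ω | R ω > l⁻¹ * t}).toReal / (ℙ {ω | Y ω > t}).toReal)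
        atTop (𝓝 (l ^ α / c)) := by
      have h1 := (hRVl l⁻¹ (inv_pos.2 hlpos)).div hBreY hc0.ne'
      have h2 : (l⁻¹ : ℝ) ^ (-α) = l ^ α := by
        rw [Real.rpow_neg (inv_nonneg.2 hlpos.le), Real.inv_rpow hlpos.le, inv_inv]
      rw [h2] at h1
      refine h1.congr fun t => ?_
      simp only [Pi.div_apply]
      rw [div_div_div_cancel_right₀ (hFpos t).ne']
    have hlt1 : l ^ α / c < 1 := (div_lt_one hc0).2 hlac
    obtain ⟨T, hT⟩ := eventually_atTop.1 (hcomb.eventually (eventually_lt_nhds hlt1))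
    filter_upwards [hp0ev, hp1ev, hqY.eventually (eventually_ge_atTop T),
      hqR.eventually (eventually_gt_atTop 0)] with p hp0 hp1 hqT hq0
    set q : ℝ := VaR R p
    set qt : ℝ := VaR Y p
    have hcdf : p ≤ (ℙ {ω | Y ω ≤ qt}).toReal := cdf_VaR_ge hYm hY0 hp0 hp1
    have hGle : (ℙ {ω | Y ω > qt}).toReal ≤ 1 - p := by
      rw [cdf_eq_one_sub hYm qt] at hcdf
      linarith
    have hrat := hT qt hqT
    have hFlt : (ℙ {ω | R ω > l⁻¹ * qt}).toReal < (ℙ {ω | Y ω > qt}).toReal := by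
      have := (div_lt_one (hGpos qt)).1 hrat
      exact this
    have hcdfR : p ≤ (ℙ {ω | R ω ≤ l⁻¹ * qt}).toReal := by
      rw [cdf_eq_one_sub hRm]
      linarith
    have hqle : q ≤ l⁻¹ * qt := VaR_le hRpos hp0 hcdfR
    have : l * q ≤ qt := by
      calc l * q ≤ l * (l⁻¹ * qt) := by
            exact mul_le_mul_of_nonneg_left hqle hlpos.le
        _ = qt := by field_simp
    rw [lt_div_iff₀ hq0]
    calc a * q < l * q := by exact mul_lt_mul_of_pos_right hla hq0
      _ ≤ qt := this
  · -- upper bound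
    intro b hb
    obtain ⟨l, hl1, hl2⟩ := exists_between hb
    have hlpos : 0 < l := lt_trans hL hl1
    have hcla : c < l ^ α := by
      rw [← hLα]
      exact Real.rpow_lt_rpow hL.le hl1 hα
    have hcomb : Tendsto (fun t => (ℙ {ω | Y ω > l * t}).toReal / (ℙ {ω | R ω > t}).toReal)
        atTop (𝓝 (c * l ^ (-α))) := by
      have h1 := (hBreY.comp (hmul l hlpos)).mul (hRVl l hlpos)
      refine h1.congr fun t => ?_
      simp only [Function.comp_apply]
      have hb := (hFpos (l * t)).ne'
      have hcne := (hFpos t).ne'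
      field_simp
    have hlt1 : c * l ^ (-α) < 1 := by
      rw [Real.rpow_neg hlpos.le]
      rw [mul_inv_lt_iff₀ (Real.rpow_pos_of_pos hlpos α)]
      simpa using hcla
    obtain ⟨T, hT⟩ := eventually_atTop.1 (hcomb.eventually (eventually_lt_nhds hlt1))
    filter_upwards [hp0ev, hp1ev, hqR.eventually (eventually_ge_atTop T),
      hqR.eventually (eventually_gt_atTop 0)] with p hp0 hp1 hqT hq0
    set q : ℝ := VaR R p
    have hcdf : p ≤ (ℙ {ω | R ω ≤ q}).toReal := cdf_VaR_ge hRm hRpos hp0 hp1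
    have hFle : (ℙ {ω | R ω > q}).toReal ≤ 1 - p := by
      rw [cdf_eq_one_sub hRm q] at hcdf
      linarith
    have hrat := hT q hqT
    have hGlt : (ℙ {ω | Y ω > l * q}).toReal < (ℙ {ω | R ω > q}).toReal :=
      (div_lt_one (hFpos q)).1 hrat
    have hcdfY : p ≤ (ℙ {ω | Y ω ≤ l * q}).toReal := by
      rw [cdf_eq_one_sub hYm]
      linarith
    have hqle : VaR Y p ≤ l * q := VaR_le hY0 hp0 hcdfY
    rw [div_lt_iff₀ hq0]
    calc VaR Y p ≤ l * q := hqle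
      _ < b * q := mul_lt_mul_of_pos_right hl2 hq0
end
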